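/- arXiv:2401.00657 — 2 statements merged into one kernel-verified Lean document; each statement's English description precedes it below -/
import Mathlib

section
/- Let P and R be real symmetric positive semidefinite n×n matrices and θ > 0, and define Q = θ(P+θI)⁻¹((R+θI)⁻¹(θI−P) − I). Then every complex eigenvalue z of I + 2Q satisfies |z| ≤ 1; equivalently, the spectral radius of I + 2Q is at most 1. -/
open Matrix

open scoped ComplexOrder

/-- The complexification of a real positive semidefinite matrix is positive semidefinite. -/
lemma aux_posSemidef_map {n : ℕ} {M : Matrix (Fin n) (Fin n) ℝ} (hM : M.PosSemidef) :
    (M.map (algebraMap ℝ ℂ)).PosSemidef := by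
  obtain ⟨S, hs⟩ : ∃ S : Matrix (Fin n) (Fin n) ℝ, M = Sᴴ * S := by
    open scoped MatrixOrder in
    obtain ⟨X, hX, -, hXX⟩ := CFC.exists_sqrt_of_isSelfAdjoint_of_quasispectrumRestricts
      hM.isHermitian (QuasispectrumRestricts.nnreal_of_nonneg hM.nonneg)
    exact ⟨X, by rw [← hXX, show Xᴴ = X from hX.star_eq]⟩
  have hmap : M.map (algebraMap ℝ ℂ)
      = (S.map (algebraMap ℝ ℂ))ᴴ * (S.map (algebraMap ℝ ℂ)) := by
    rw [← Matrix.conjTranspose_map (algebraMap ℝ ℂ)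
      (fun x => by simp [Complex.conj_ofReal])]
    rw [← Matrix.map_mul, ← hs]
  rw [hmap]
  exact Matrix.posSemidef_conjTranspose_mul_self _

/-- smul of a PSD matrix by a nonneg real is PSD -/
lemma aux_psd_smul {n : ℕ} {c : ℝ} (hc : 0 ≤ c) {M : Matrix (Fin n) (Fin n) ℝ}
    (hM : M.PosSemidef) : (c • M).PosSemidef := by
  exact hM.smul hc

/-- θ • 1 is positive definite -/
lemma aux_posDef_smul_one {n : ℕ} {θ : ℝ} (hθ : 0 < θ) :
    (θ • (1 : Matrix (Fin n) (Fin n) ℝ)).PosDef := by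
  exact Matrix.PosDef.one.smul hθ

/-- The reflected resolvent of a PSD matrix is a contraction: `1 - RᴴR` is PSD for
`R = (θ•1 - S)(S + θ•1)⁻¹`. -/
lemma aux_cayley {n : ℕ} {θ : ℝ} (hθ : 0 < θ) {S : Matrix (Fin n) (Fin n) ℝ}
    (hS : S.PosSemidef) :
    ((1 : Matrix (Fin n) (Fin n) ℝ) -
      ((θ • 1 - S) * (S + θ • 1)⁻¹)ᴴ * ((θ • 1 - S) * (S + θ • 1)⁻¹)).PosSemidef := by
  set A : Matrix (Fin n) (Fin n) ℝ := S + θ • 1 with hAdef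
  have hA : A.PosDef := Matrix.PosDef.posSemidef_add hS (aux_posDef_smul_one hθ)
  have hAu : IsUnit A.det := (Matrix.isUnit_iff_isUnit_det A).mp hA.isUnit
  have hAAi : A * A⁻¹ = 1 := Matrix.mul_nonsing_inv A hAu
  have hAiA : A⁻¹ * A = 1 := Matrix.nonsing_inv_mul A hAu
  have hAih : (A⁻¹)ᴴ = A⁻¹ := hA.isHermitian.inv
  have hθSh : (θ • 1 - S)ᴴ = θ • (1 : Matrix (Fin n) (Fin n) ℝ) - S := by
    rw [Matrix.conjTranspose_sub, Matrix.conjTranspose_smul, Matrix.conjTranspose_one,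
      hS.isHermitian.eq]
    simp
  have hsq : (θ • 1 - S) * (θ • 1 - S) + (4 * θ) • S = A * A := by
    rw [hAdef]
    simp only [Matrix.sub_mul, Matrix.mul_sub, Matrix.add_mul, Matrix.mul_add,
      Matrix.smul_mul, Matrix.mul_smul, Matrix.one_mul, Matrix.mul_one]
    module
  have key : (1 : Matrix (Fin n) (Fin n) ℝ) -
      ((θ • 1 - S) * A⁻¹)ᴴ * ((θ • 1 - S) * A⁻¹)
      = (A⁻¹)ᴴ * ((4 * θ) • S) * A⁻¹ := by
    rw [Matrix.conjTranspose_mul, hAih, hθSh]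
    have e1 : (1 : Matrix (Fin n) (Fin n) ℝ) = A⁻¹ * (A * A) * A⁻¹ := by
      rw [← Matrix.mul_assoc, hAiA, Matrix.one_mul, hAAi]
    nth_rewrite 1 [e1]
    calc A⁻¹ * (A * A) * A⁻¹ - A⁻¹ * (θ • 1 - S) * ((θ • 1 - S) * A⁻¹)
        = A⁻¹ * ((A * A) - (θ • 1 - S) * (θ • 1 - S)) * A⁻¹ := by
          simp only [Matrix.mul_sub, Matrix.sub_mul, Matrix.mul_assoc]
      _ = A⁻¹ * ((4 * θ) • S) * A⁻¹ := by
          rw [← hsq]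
          congr 2
          abel
  rw [key]
  exact (aux_psd_smul (by positivity) hS).conjTranspose_mul_mul_same A⁻¹

/-- The contraction property from positive semidefiniteness of `1 - Tᴴ * T`. -/
lemma aux_contract {n : ℕ} {T : Matrix (Fin n) (Fin n) ℂ}
    (h : ((1 : Matrix (Fin n) (Fin n) ℂ) - Tᴴ * T).PosSemidef) (x : Fin n → ℂ) :
    (star (T *ᵥ x) ⬝ᵥ (T *ᵥ x)).re ≤ (star x ⬝ᵥ x).re := by
  have h0 := h.re_dotProduct_nonneg x
  have he : star x ⬝ᵥ (((1 : Matrix (Fin n) (Fin n) ℂ) - Tᴴ * T) *ᵥ x)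
      = star x ⬝ᵥ x - star (T *ᵥ x) ⬝ᵥ (T *ᵥ x) := by
    rw [Matrix.sub_mulVec, dotProduct_sub, Matrix.one_mulVec,
      ← Matrix.mulVec_mulVec, Matrix.dotProduct_mulVec, ← Matrix.star_mulVec]
  rw [he] at h0
  simpa [Complex.sub_re] using h0

/-- Let P and R be real symmetric positive semidefinite n×n matrices and θ > 0, and
define Q = θ(P+θI)⁻¹((R+θI)⁻¹(θI−P) − I). Then every complex eigenvalue z of I + 2Q
satisfies |z| ≤ 1, i.e. the spectral radius of I + 2Q is at most 1. -/
theorem spectral_radius_I_add_two_Q_le_one {n : ℕ} (θ : ℝ) (hθ : 0 < θ)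
    (P R Q : Matrix (Fin n) (Fin n) ℝ)
    (hP : P.PosSemidef) (hR : R.PosSemidef)
    (hQ : Q = θ • ((P + θ • (1 : Matrix (Fin n) (Fin n) ℝ))⁻¹ *
      ((R + θ • (1 : Matrix (Fin n) (Fin n) ℝ))⁻¹ *
        (θ • (1 : Matrix (Fin n) (Fin n) ℝ) - P) - 1))) :
    ∀ z ∈ spectrum ℂ
      (((1 : Matrix (Fin n) (Fin n) ℝ) + (2 : ℝ) • Q).map (algebraMap ℝ ℂ)),
      ‖z‖ ≤ 1 := by
  intro z hz
  set A : Matrix (Fin n) (Fin n) ℝ := P + θ • 1 with hAdef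
  set B : Matrix (Fin n) (Fin n) ℝ := R + θ • 1 with hBdef
  have hA : A.PosDef := Matrix.PosDef.posSemidef_add hP (aux_posDef_smul_one hθ)
  have hB : B.PosDef := Matrix.PosDef.posSemidef_add hR (aux_posDef_smul_one hθ)
  have hAu : IsUnit A.det := (Matrix.isUnit_iff_isUnit_det A).mp hA.isUnit
  have hBu : IsUnit B.det := (Matrix.isUnit_iff_isUnit_det B).mp hB.isUnit
  have hAAi : A * A⁻¹ = 1 := Matrix.mul_nonsing_inv A hAu
  have hAiA : A⁻¹ * A = 1 := Matrix.nonsing_inv_mul A hAu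
  have hBBi : B * B⁻¹ = 1 := Matrix.mul_nonsing_inv B hBu
  set RP : Matrix (Fin n) (Fin n) ℝ := (θ • 1 - P) * A⁻¹ with hRPdef
  set RR : Matrix (Fin n) (Fin n) ℝ := (θ • 1 - R) * B⁻¹ with hRRdef
  set C : Matrix (Fin n) (Fin n) ℝ := RR * RP with hCdef
  have hRR' : RR = (2 * θ) • B⁻¹ - 1 := by
    have : θ • (1 : Matrix (Fin n) (Fin n) ℝ) - R = (2 * θ) • 1 - B := by
      rw [hBdef]; module
    rw [hRRdef, this, Matrix.sub_mul, Matrix.smul_mul, Matrix.one_mul, hBBi]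
  -- key similarity identity
  have hkey : A * (1 + (2:ℝ) • Q) = C * A := by
    rw [hQ, hCdef, hRPdef, hRR']
    have e1 : (θ • 1 - P) * A⁻¹ * A = θ • 1 - P := by
      rw [Matrix.mul_assoc, hAiA, Matrix.mul_one]
    rw [Matrix.mul_assoc _ _ A, e1, smul_smul]
    have e2 : A * ((2 * θ) • (A⁻¹ * (B⁻¹ * (θ • 1 - P) - 1)))
        = (2 * θ) • (B⁻¹ * (θ • 1 - P) - 1) := by
      rw [Matrix.mul_smul, ← Matrix.mul_assoc, hAAi, Matrix.one_mul]
    rw [Matrix.mul_add, Matrix.mul_one, e2, hAdef]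
    simp only [Matrix.sub_mul, Matrix.smul_mul, Matrix.one_mul, Matrix.mul_sub,
      Matrix.mul_one, smul_sub]
    module
  -- contraction properties over ℝ
  have hRPcon : ((1 : Matrix (Fin n) (Fin n) ℝ) - RPᴴ * RP).PosSemidef := aux_cayley hθ hP
  have hRRcon : ((1 : Matrix (Fin n) (Fin n) ℝ) - RRᴴ * RR).PosSemidef := aux_cayley hθ hR
  -- pass to ℂ
  set F := (algebraMap ℝ ℂ).mapMatrix (m := Fin n) with hFdef
  -- eigenvector for the mapped matrix
  rw [spectrum.mem_iff] at hz
  have hdet : ((z • (1 : Matrix (Fin n) (Fin n) ℂ)) - F (1 + (2:ℝ) • Q)).det = 0 := by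
    by_contra hd
    apply hz
    have hU : IsUnit ((z • (1 : Matrix (Fin n) (Fin n) ℂ)) - F (1 + (2:ℝ) • Q)) :=
      (Matrix.isUnit_iff_isUnit_det _).mpr (Ne.isUnit hd)
    rwa [Algebra.algebraMap_eq_smul_one]
  obtain ⟨v, hv0, hveq⟩ := (Matrix.exists_mulVec_eq_zero_iff).mpr hdet
  have heig : F (1 + (2:ℝ) • Q) *ᵥ v = z • v := by
    rw [Matrix.sub_mulVec, sub_eq_zero] at hveq
    rw [← hveq, Matrix.smul_mulVec, Matrix.one_mulVec]
  -- transfer eigenvector through similarity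
  set w : Fin n → ℂ := F A *ᵥ v with hwdef
  have hw0 : w ≠ 0 := by
    have hdetA : (F A).det ≠ 0 := by
      rw [← RingHom.map_det]
      simpa using hA.det_pos.ne'
    have hinj : Function.Injective (F A).mulVec :=
      Matrix.mulVec_injective_iff_isUnit.mpr ((Matrix.isUnit_iff_isUnit_det _).mpr
        (Ne.isUnit hdetA))
    intro hw
    exact hv0 (hinj (by simpa [Matrix.mulVec_zero] using hw))
  have hCeig : F C *ᵥ w = z • w := by
    rw [hwdef, Matrix.mulVec_mulVec, ← _root_.map_mul F, ← hkey, _root_.map_mul F,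
      ← Matrix.mulVec_mulVec, heig, Matrix.mulVec_smul]
  -- complexified contraction facts
  have hherm : ∀ M : Matrix (Fin n) (Fin n) ℝ,
      F (Mᴴ * M) = (F M)ᴴ * (F M) := by
    intro M
    rw [_root_.map_mul F]
    congr 1
    exact Matrix.conjTranspose_map (algebraMap ℝ ℂ)
      (fun x => by simp [Complex.conj_ofReal]) |>.symm ▸
      (Matrix.conjTranspose_map (algebraMap ℝ ℂ)
        (fun x => by simp [Complex.conj_ofReal]))
  have hmapc : ∀ M : Matrix (Fin n) (Fin n) ℝ,
      ((1 : Matrix (Fin n) (Fin n) ℝ) - Mᴴ * M).PosSemidef →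
      ((1 : Matrix (Fin n) (Fin n) ℂ) - (F M)ᴴ * (F M)).PosSemidef := by
    intro M hM
    have := aux_posSemidef_map hM
    have hmap : ((1 : Matrix (Fin n) (Fin n) ℝ) - Mᴴ * M).map (algebraMap ℝ ℂ)
        = (1 : Matrix (Fin n) (Fin n) ℂ) - (F M)ᴴ * (F M) := by
      show F (1 - Mᴴ * M) = _
      rw [map_sub F, _root_.map_one F, hherm]
    rwa [hmap] at this
  have hRPc := hmapc RP hRPcon
  have hRRc := hmapc RR hRRcon
  -- norm chain
  have hq1 := aux_contract hRPc w
  have hq2 := aux_contract hRRc (F RP *ᵥ w)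
  have hFC : F C *ᵥ w = F RR *ᵥ (F RP *ᵥ w) := by
    rw [hCdef, _root_.map_mul F, ← Matrix.mulVec_mulVec]
  have hchain : (star (z • w) ⬝ᵥ (z • w)).re ≤ (star w ⬝ᵥ w).re := by
    rw [← hCeig, hFC]
    exact le_trans hq2 hq1
  have hzw : (star (z • w) ⬝ᵥ (z • w)) = (Complex.normSq z : ℂ) * (star w ⬝ᵥ w) := by
    rw [star_smul, smul_dotProduct, dotProduct_smul, smul_eq_mul, smul_eq_mul,
      ← mul_assoc]
    congr 1
    rw [Complex.star_def, mul_comm, Complex.mul_conj]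
  have hpos : 0 < (star w ⬝ᵥ w).re := by
    have := Matrix.dotProduct_star_self_pos_iff.mpr hw0
    exact (Complex.lt_def.mp this).1
  have hns : Complex.normSq z * (star w ⬝ᵥ w).re ≤ (star w ⬝ᵥ w).re := by
    have := hchain
    rwa [hzw, Complex.re_ofReal_mul] at this
  have hns1 : Complex.normSq z ≤ 1 := by
    by_contra hgt
    push_neg at hgt
    nlinarith
  nlinarith [Complex.sq_norm z, norm_nonneg z]
end

section
/- (Theorem 1) Let θ>0, μ>0, A a real m×n matrix and L a real n×n matrix, and define Q = θ(μAᵀA+θI)⁻¹((LᵀL+θI)⁻¹(θI−μAᵀA) − I). Then every complex eigenvalue z of the ADMM iteration matrix I + Q satisfies |z| ≤ 1; that is, the spectral radius ρ(I+Q) ≤ 1, regardless of the value of θ. -/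
open Matrix

open scoped ComplexOrder

section Aux

variable {n : ℕ}

private lemma dot_mulVec_self (M : Matrix (Fin n) (Fin n) ℂ) (y : Fin n → ℂ) :
    star (M *ᵥ y) ⬝ᵥ (M *ᵥ y) = star y ⬝ᵥ ((Mᴴ * M) *ᵥ y) := by
  rw [star_mulVec, dotProduct_mulVec, dotProduct_mulVec, vecMul_vecMul]

private lemma smul_one_posDef {θ : ℝ} (hθ : 0 < θ) :
    ((θ : ℂ) • (1 : Matrix (Fin n) (Fin n) ℂ)).PosDef := by
  refine Matrix.PosDef.of_dotProduct_mulVec_pos ?_ ?_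
  · unfold Matrix.IsHermitian
    rw [conjTranspose_smul, conjTranspose_one]
    congr 1
    simp [Complex.conj_ofReal]
  · intro x hx
    rw [smul_mulVec, one_mulVec, dotProduct_smul, smul_eq_mul]
    exact mul_pos (Complex.zero_lt_real.mpr hθ) (dotProduct_star_self_pos_iff.mpr hx)

private lemma smul_one_posDef_real {θ : ℝ} (hθ : 0 < θ) :
    (θ • (1 : Matrix (Fin n) (Fin n) ℝ)).PosDef := by
  refine Matrix.PosDef.of_dotProduct_mulVec_pos ?_ fun x hx => ?_
  · unfold Matrix.IsHermitian
    rw [conjTranspose_smul, conjTranspose_one]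
    simp
  · rw [smul_mulVec, one_mulVec, dotProduct_smul, smul_eq_mul]
    exact mul_pos hθ (dotProduct_star_self_pos_iff.mpr hx)

private lemma smul_posSemidef {μ : ℝ} (hμ : 0 ≤ μ) {X : Matrix (Fin n) (Fin n) ℂ}
    (hX : X.PosSemidef) : ((μ : ℂ) • X).PosSemidef := by
  refine Matrix.PosSemidef.of_dotProduct_mulVec_nonneg ?_ fun x => ?_
  · unfold Matrix.IsHermitian
    rw [conjTranspose_smul, hX.1]
    congr 1
    simp [Complex.conj_ofReal]
  · rw [smul_mulVec, dotProduct_smul, smul_eq_mul]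
    exact mul_nonneg (Complex.zero_le_real.mpr hμ) (hX.dotProduct_mulVec_nonneg x)

private lemma smul_posSemidef_real {μ : ℝ} (hμ : 0 ≤ μ) {X : Matrix (Fin n) (Fin n) ℝ}
    (hX : X.PosSemidef) : (μ • X).PosSemidef := by
  refine Matrix.PosSemidef.of_dotProduct_mulVec_nonneg ?_ fun x => ?_
  · unfold Matrix.IsHermitian
    rw [conjTranspose_smul, hX.1]
    simp
  · rw [smul_mulVec, dotProduct_smul, smul_eq_mul]
    exact mul_nonneg hμ (hX.dotProduct_mulVec_nonneg x)

/-- key contraction estimate: `‖(θ - X) y‖² ≤ ‖(X + θ) y‖²` for `X` PSD. -/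
private lemma contract {θ : ℝ} (hθ : 0 < θ) {X : Matrix (Fin n) (Fin n) ℂ}
    (hX : X.PosSemidef) (y : Fin n → ℂ) :
    star (((θ : ℂ) • 1 - X) *ᵥ y) ⬝ᵥ (((θ : ℂ) • 1 - X) *ᵥ y)
      ≤ star ((X + (θ : ℂ) • 1) *ᵥ y) ⬝ᵥ ((X + (θ : ℂ) • 1) *ᵥ y) := by
  have hXh : Xᴴ = X := hX.1
  have hsm : ((θ : ℂ) • (1 : Matrix (Fin n) (Fin n) ℂ))ᴴ = (θ : ℂ) • 1 := by
    rw [conjTranspose_smul, conjTranspose_one]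
    congr 1
    simp [Complex.conj_ofReal]
  have h1 : ((θ : ℂ) • 1 - X)ᴴ = (θ : ℂ) • 1 - X := by
    rw [conjTranspose_sub, hXh, hsm]
  have h2 : (X + (θ : ℂ) • 1)ᴴ = X + (θ : ℂ) • 1 := by
    rw [conjTranspose_add, hXh, hsm]
  rw [dot_mulVec_self, dot_mulVec_self, h1, h2]
  have hc : X * ((θ : ℂ) • 1) = (θ : ℂ) • X := by
    rw [Matrix.mul_smul, mul_one]
  have hc' : ((θ : ℂ) • 1) * X = (θ : ℂ) • X := by
    rw [Matrix.smul_mul, one_mul]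
  have hdiff : (X + (θ : ℂ) • 1) * (X + (θ : ℂ) • 1)
      - ((θ : ℂ) • 1 - X) * ((θ : ℂ) • 1 - X) = ((4 * θ : ℝ) : ℂ) • X := by
    rw [add_mul, mul_add, mul_add, sub_mul, mul_sub, mul_sub, hc, hc']
    push_cast
    module
  have hkey : star y ⬝ᵥ ((X + (θ : ℂ) • 1) * (X + (θ : ℂ) • 1)) *ᵥ y
      - star y ⬝ᵥ (((θ : ℂ) • 1 - X) * ((θ : ℂ) • 1 - X)) *ᵥ y
      = ((4 * θ : ℝ) : ℂ) * (star y ⬝ᵥ X *ᵥ y) := by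
    rw [← dotProduct_sub, ← sub_mulVec, hdiff, smul_mulVec, dotProduct_smul, smul_eq_mul]
  have hpos : (0 : ℂ) ≤ ((4 * θ : ℝ) : ℂ) * (star y ⬝ᵥ X *ᵥ y) :=
    mul_nonneg (Complex.zero_le_real.mpr (by linarith)) (hX.dotProduct_mulVec_nonneg y)
  rw [← sub_nonneg, hkey]
  exact hpos

end Aux

set_option maxHeartbeats 1000000 in
/-- (Theorem 1) Let θ>0, μ>0, A a real m×n matrix and L a real n×n matrix, and define
Q = θ(μAᵀA+θI)⁻¹((LᵀL+θI)⁻¹(θI−μAᵀA) − I). Then every complex eigenvalue z of the ADMM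
iteration matrix I + Q satisfies |z| ≤ 1, i.e. ρ(I+Q) ≤ 1, regardless of θ. -/
theorem admm_spectral_radius_le_one {m n : ℕ} (θ μ : ℝ) (hθ : 0 < θ) (hμ : 0 < μ)
    (A : Matrix (Fin m) (Fin n) ℝ) (L : Matrix (Fin n) (Fin n) ℝ)
    (Q : Matrix (Fin n) (Fin n) ℝ)
    (hQ : Q = θ • ((μ • (Aᵀ * A) + θ • (1 : Matrix (Fin n) (Fin n) ℝ))⁻¹ *
      ((Lᵀ * L + θ • (1 : Matrix (Fin n) (Fin n) ℝ))⁻¹ *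
        (θ • (1 : Matrix (Fin n) (Fin n) ℝ) - μ • (Aᵀ * A)) - 1))) :
    ∀ z ∈ spectrum ℂ
      (((1 : Matrix (Fin n) (Fin n) ℝ) + Q).map (algebraMap ℝ ℂ)),
      ‖z‖ ≤ 1 := by
  intro z hz
  classical
  set f : ℝ →+* ℂ := algebraMap ℝ ℂ with hf
  -- real matrices
  set Sr : Matrix (Fin n) (Fin n) ℝ := μ • (Aᵀ * A) with hSrdef
  set Pr : Matrix (Fin n) (Fin n) ℝ := Sr + θ • 1 with hPrdef
  set Rr : Matrix (Fin n) (Fin n) ℝ := Lᵀ * L + θ • 1 with hRrdef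
  -- complex matrices
  set Ac : Matrix (Fin m) (Fin n) ℂ := A.map f with hAcdef
  set Lc : Matrix (Fin n) (Fin n) ℂ := L.map f with hLcdef
  set Sc : Matrix (Fin n) (Fin n) ℂ := (μ : ℂ) • (Acᴴ * Ac) with hScdef
  set Xc : Matrix (Fin n) (Fin n) ℂ := Lcᴴ * Lc with hXcdef
  set Pc : Matrix (Fin n) (Fin n) ℂ := Sc + (θ : ℂ) • 1 with hPcdef
  set Rc : Matrix (Fin n) (Fin n) ℂ := Xc + (θ : ℂ) • 1 with hRcdef
  -- map facts
  have hmapS : Sr.map f = Sc := by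
    ext i j
    simp [hSrdef, hScdef, hAcdef, Matrix.map_apply, Matrix.mul_apply, Matrix.smul_apply,
      conjTranspose_apply, Complex.conj_ofReal, hf, Complex.ofReal_sum]
  have hmapP : Pr.map f = Pc := by
    ext i j
    simp [hPrdef, hPcdef, hSrdef, hScdef, hAcdef, Matrix.map_apply, Matrix.add_apply,
      Matrix.mul_apply, Matrix.smul_apply, Matrix.one_apply, apply_ite,
      conjTranspose_apply, Complex.conj_ofReal, hf, Complex.ofReal_sum]
    split_ifs with h <;> simp [h]
  have hmapR : Rr.map f = Rc := by
    ext i j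
    simp [hRrdef, hRcdef, hXcdef, hLcdef, Matrix.map_apply, Matrix.add_apply,
      Matrix.mul_apply, Matrix.smul_apply, Matrix.one_apply, apply_ite,
      conjTranspose_apply, Complex.conj_ofReal, hf, Complex.ofReal_sum]
    split_ifs with h <;> simp [h]
  -- positive (semi)definiteness
  have hAcH : Acᴴ = Aᵀ.map f := by
    ext i j
    simp [hAcdef, conjTranspose_apply, Matrix.map_apply, hf, Complex.conj_ofReal]
  have hScPSD : Sc.PosSemidef := smul_posSemidef hμ.le (posSemidef_conjTranspose_mul_self Ac)
  have hXcPSD : Xc.PosSemidef := posSemidef_conjTranspose_mul_self Lc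
  have hPcPD : Pc.PosDef := Matrix.PosDef.posSemidef_add hScPSD (smul_one_posDef hθ)
  have hRcPD : Rc.PosDef := Matrix.PosDef.posSemidef_add hXcPSD (smul_one_posDef hθ)
  have hSrPSD : Sr.PosSemidef := by
    rw [hSrdef]
    exact smul_posSemidef_real hμ.le
      (by simpa [conjTranspose_eq_transpose_of_trivial] using posSemidef_conjTranspose_mul_self A)
  have hLLPSD : (Lᵀ * L).PosSemidef := by
    simpa [conjTranspose_eq_transpose_of_trivial] using posSemidef_conjTranspose_mul_self L
  have hPrPD : Pr.PosDef := Matrix.PosDef.posSemidef_add hSrPSD (smul_one_posDef_real hθ)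
  have hRrPD : Rr.PosDef := Matrix.PosDef.posSemidef_add hLLPSD (smul_one_posDef_real hθ)
  -- inverses
  have hPrmul : Pr * Pr⁻¹ = 1 := Matrix.mul_nonsing_inv _ hPrPD.det_pos.ne'.isUnit
  have hRrmul : Rr * Rr⁻¹ = 1 := Matrix.mul_nonsing_inv _ hRrPD.det_pos.ne'.isUnit
  have hPcmul : Pc * Pc⁻¹ = 1 := Matrix.mul_nonsing_inv _ hPcPD.det_pos.ne'.isUnit
  have hRcmul : Rc * Rc⁻¹ = 1 := Matrix.mul_nonsing_inv _ hRcPD.det_pos.ne'.isUnit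
  have hmapPinv : Pr⁻¹.map f = Pc⁻¹ := by
    refine (Matrix.inv_eq_right_inv ?_).symm
    rw [← hmapP, ← Matrix.map_mul, hPrmul]
    simp
  have hmapRinv : Rr⁻¹.map f = Rc⁻¹ := by
    refine (Matrix.inv_eq_right_inv ?_).symm
    rw [← hmapR, ← Matrix.map_mul, hRrmul]
    simp
  -- the complex iteration matrix
  set Tc : Matrix (Fin n) (Fin n) ℂ :=
    1 + (θ : ℂ) • (Pc⁻¹ * (Rc⁻¹ * ((θ : ℂ) • 1 - Sc) - 1)) with hTcdef
  have hθ1 : (θ • (1 : Matrix (Fin n) (Fin n) ℝ)).map ⇑f = (θ : ℂ) • 1 := by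
    ext i j
    simp [Matrix.map_apply, Matrix.smul_apply, Matrix.one_apply, hf, apply_ite]
    split_ifs with h <;> simp [h]
  have hT : ((1 : Matrix (Fin n) (Fin n) ℝ) + Q).map ⇑f = Tc := by
    have hsmul : θ • (Pr⁻¹ * (Rr⁻¹ * (θ • (1 : Matrix (Fin n) (Fin n) ℝ) - Sr) - 1))
        = (θ • (1 : Matrix (Fin n) (Fin n) ℝ)) *
          (Pr⁻¹ * (Rr⁻¹ * (θ • (1 : Matrix (Fin n) (Fin n) ℝ) - Sr) - 1)) := by
      rw [Matrix.smul_mul, one_mul]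
    calc ((1 : Matrix (Fin n) (Fin n) ℝ) + Q).map ⇑f
        = f.mapMatrix (1 + θ • (Pr⁻¹ * (Rr⁻¹ * (θ • 1 - Sr) - 1))) := by rw [hQ]; rfl
      _ = 1 + ((θ : ℂ) • 1) * (Pc⁻¹ * (Rc⁻¹ * ((θ : ℂ) • 1 - Sc) - 1)) := by
          rw [hsmul]
          simp only [_root_.map_add, _root_.map_one, _root_.map_mul, _root_.map_sub, RingHom.mapMatrix_apply]
          rw [hθ1, hmapPinv, hmapRinv, hmapS]
      _ = Tc := by rw [hTcdef, Matrix.smul_mul, one_mul]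
  -- Cayley-type factors
  set C1 : Matrix (Fin n) (Fin n) ℂ := ((θ : ℂ) • 1 - Sc) * Pc⁻¹ with hC1def
  set C2 : Matrix (Fin n) (Fin n) ℂ := ((θ : ℂ) • 1 - Xc) * Rc⁻¹ with hC2def
  set K : Matrix (Fin n) (Fin n) ℂ := Rc⁻¹ * C1 with hKdef
  set G : Matrix (Fin n) (Fin n) ℂ := (2 : ℂ)⁻¹ • (1 + C2 * C1) with hGdef
  have hBp : C1 = (2 * (θ : ℂ)) • Pc⁻¹ - 1 := by
    rw [hC1def, show (θ : ℂ) • (1 : Matrix (Fin n) (Fin n) ℂ) - Sc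
      = (2 * (θ : ℂ)) • 1 - Pc from by rw [hPcdef]; module]
    rw [Matrix.sub_mul, Matrix.smul_mul, one_mul, hPcmul]
  have hB'r : ((θ : ℂ) • 1 - Xc) * Rc⁻¹ = (2 * (θ : ℂ)) • Rc⁻¹ - 1 := by
    rw [show (θ : ℂ) • (1 : Matrix (Fin n) (Fin n) ℂ) - Xc
      = (2 * (θ : ℂ)) • 1 - Rc from by rw [hRcdef]; module]
    rw [Matrix.sub_mul, Matrix.smul_mul, one_mul, hRcmul]
  have hC : C2 * C1 = (2 * (θ : ℂ)) • K - ((2 * (θ : ℂ)) • Pc⁻¹ - 1) := by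
    rw [hC2def, hB'r, Matrix.sub_mul, Matrix.smul_mul, one_mul, ← hKdef, ← hBp]
  -- the conjugation identity
  have hPT : Pc * Tc * Pc⁻¹ = G := by
    have h1 : Pc * (Pc⁻¹ * (Rc⁻¹ * ((θ : ℂ) • 1 - Sc) - 1))
        = Rc⁻¹ * ((θ : ℂ) • 1 - Sc) - 1 := by
      rw [← Matrix.mul_assoc, hPcmul, one_mul]
    have h2 : Pc * Tc = Pc + (θ : ℂ) • (Rc⁻¹ * ((θ : ℂ) • 1 - Sc) - 1) := by
      rw [hTcdef, mul_add, mul_one, mul_smul_comm, h1]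
    have h3 : Pc * Tc * Pc⁻¹ = 1 + (θ : ℂ) • K - (θ : ℂ) • Pc⁻¹ := by
      rw [h2, Matrix.add_mul, Matrix.smul_mul, Matrix.sub_mul, one_mul, hPcmul,
        Matrix.mul_assoc, ← hC1def, ← hKdef, smul_sub]
      abel
    rw [h3, hGdef, hC]
    module
  -- move the eigenvalue to G
  have hzG : z ∈ spectrum ℂ G := by
    rw [hT] at hz
    obtain ⟨u, hu⟩ := hPcPD.isUnit
    have hcu : (u : Matrix (Fin n) (Fin n) ℂ) * Tc * (↑u⁻¹ : Matrix (Fin n) (Fin n) ℂ) = G := by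
      rw [Matrix.coe_units_inv, hu]
      exact hPT
    rw [← spectrum.units_conjugate (u := u) (a := Tc), hcu] at hz
    exact hz
  -- obtain an eigenvector
  have hzG' : z ∈ spectrum ℂ (Matrix.toLinAlgEquiv' G) := by
    rw [AlgEquiv.spectrum_eq]
    exact hzG
  obtain ⟨v, hvmem, hvne⟩ :=
    (Module.End.hasEigenvalue_iff_mem_spectrum.mpr hzG').exists_hasEigenvector
  have hGv : G *ᵥ v = z • v := by
    rw [← Matrix.toLinAlgEquiv'_apply]
    exact Module.End.HasEigenvector.apply_eq_smul ⟨hvmem, hvne⟩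
  -- derive the eigenvector equation for C2 * C1
  have hCCv : (C2 * C1) *ᵥ v = (2 * z - 1) • v := by
    have e1 : G *ᵥ v = (2 : ℂ)⁻¹ • (v + (C2 * C1) *ᵥ v) := by
      rw [hGdef, smul_mulVec, add_mulVec, one_mulVec]
    have h2 : v + (C2 * C1) *ᵥ v = (2 * z) • v := by
      calc v + (C2 * C1) *ᵥ v
          = (2 : ℂ) • ((2 : ℂ)⁻¹ • (v + (C2 * C1) *ᵥ v)) := by
            rw [smul_smul]; norm_num
        _ = (2 : ℂ) • (z • v) := by rw [← e1, hGv]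
        _ = (2 * z) • v := by rw [smul_smul]
      
    have h3 : (C2 * C1) *ᵥ v = (2 * z) • v - v := by
      rw [← h2]; abel
    rw [h3, sub_smul, one_smul]
  -- contraction estimates
  have hstep1 : star (C1 *ᵥ v) ⬝ᵥ (C1 *ᵥ v) ≤ star v ⬝ᵥ v := by
    have hy : Pc *ᵥ (Pc⁻¹ *ᵥ v) = v := by rw [mulVec_mulVec, hPcmul, one_mulVec]
    have h := contract hθ hScPSD (Pc⁻¹ *ᵥ v)
    rw [← hPcdef, hy] at h
    rw [hC1def, ← mulVec_mulVec]
    exact h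
  have hstep2 : star (C2 *ᵥ (C1 *ᵥ v)) ⬝ᵥ (C2 *ᵥ (C1 *ᵥ v))
      ≤ star (C1 *ᵥ v) ⬝ᵥ (C1 *ᵥ v) := by
    have hy : Rc *ᵥ (Rc⁻¹ *ᵥ (C1 *ᵥ v)) = C1 *ᵥ v := by
      rw [mulVec_mulVec, hRcmul, one_mulVec]
    have h := contract hθ hXcPSD (Rc⁻¹ *ᵥ (C1 *ᵥ v))
    rw [← hRcdef, hy] at h
    rw [hC2def, ← mulVec_mulVec]
    exact h
  have hchain : star ((2 * z - 1) • v) ⬝ᵥ ((2 * z - 1) • v) ≤ star v ⬝ᵥ v := by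
    rw [← hCCv, ← mulVec_mulVec]
    exact le_trans hstep2 hstep1
  -- turn into a real inequality
  have hsmuldot : star ((2 * z - 1) • v) ⬝ᵥ ((2 * z - 1) • v)
      = ((Complex.normSq (2 * z - 1) : ℝ) : ℂ) * (star v ⬝ᵥ v) := by
    rw [star_smul, smul_dotProduct, dotProduct_smul, smul_eq_mul, smul_eq_mul,
      ← mul_assoc, Complex.star_def, ← Complex.normSq_eq_conj_mul_self]
  rw [hsmuldot] at hchain
  have hE : (0 : ℂ) < star v ⬝ᵥ v := dotProduct_star_self_pos_iff.mpr hvne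
  have hEre : 0 < (star v ⬝ᵥ v).re := (Complex.lt_def.mp hE).1
  have hEim : (star v ⬝ᵥ v).im = 0 := ((Complex.lt_def.mp hE).2).symm
  have hre : (((Complex.normSq (2 * z - 1) : ℝ) : ℂ) * (star v ⬝ᵥ v)).re
      ≤ (star v ⬝ᵥ v).re := (Complex.le_def.mp hchain).1
  rw [Complex.mul_re, Complex.ofReal_re, Complex.ofReal_im, zero_mul, sub_zero] at hre
  have hs1 : Complex.normSq (2 * z - 1) ≤ 1 := by nlinarith
  have habs1 : ‖2 * z - 1‖ ≤ 1 := by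
    nlinarith [Complex.sq_norm (2 * z - 1), norm_nonneg (2 * z - 1)]
  have h2z : ‖2 * z‖ ≤ ‖2 * z - 1‖ + 1 := by
    simpa using norm_add_le (2 * z - 1) 1
  have h2z' : ‖2 * z‖ = 2 * ‖z‖ := by
    rw [norm_mul, Complex.norm_two]
  linarith
end
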